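/- For every d ∈ ℕ, the (d+1)×(d+1) Hankel matrix with (i,j)-entry equal to the central binomial coefficient C(2(i+j), i+j) has determinant 2^d; in particular it is invertible. -/

import Mathlib

open Finset Matrix


lemma key_sum (i j : ℕ) :
    (2 * (i + j)).choose (i + j) =
      (2 * i).choose i * (2 * j).choose j +
        2 * ∑ k ∈ range (min i j),
          (2 * i).choose (i - (k + 1)) * (2 * j).choose (j - (k + 1)) := by
  have hlow : ∑ a ∈ range i, (2 * i).choose a * (2 * j).choose (i + j - a)
      = ∑ k ∈ range (min i j), (2 * i).choose (i - (k + 1)) * (2 * j).choose (j - (k + 1)) := by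
    have h1 : ∑ a ∈ range i, (2 * i).choose a * (2 * j).choose (i + j - a)
        = ∑ t ∈ range i,
            (if t < min i j then (2 * i).choose (i - (t + 1)) * (2 * j).choose (j - (t + 1)) else 0) := by
      rw [← Finset.sum_range_reflect]
      refine Finset.sum_congr rfl fun t ht => ?_
      have ht' : t < i := Finset.mem_range.1 ht
      have e1 : i - 1 - t = i - (t + 1) := by omega
      have e2 : i + j - (i - (t + 1)) = j + (t + 1) := by omega
      rw [e1, e2]
      by_cases h : t + 1 ≤ j
      · rw [if_pos (by omega)]
        congr 1
        rw [← Nat.choose_symm (by omega : j + (t + 1) ≤ 2 * j)]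
        congr 1; omega
      · rw [if_neg (by omega), Nat.choose_eq_zero_of_lt (by omega : 2 * j < j + (t + 1)),
          mul_zero]
    rw [h1, ← Finset.sum_subset (Finset.range_subset_range.2 (min_le_left i j))
      (fun t _ ht' => if_neg (by simpa using ht'))]
    exact Finset.sum_congr rfl fun t ht => if_pos (Finset.mem_range.1 ht)
  have hhigh : ∑ k ∈ range j, (2 * i).choose (i + 1 + k) * (2 * j).choose (i + j - (i + 1 + k))
      = ∑ k ∈ range (min i j), (2 * i).choose (i - (k + 1)) * (2 * j).choose (j - (k + 1)) := by
    have h1 : ∑ k ∈ range j, (2 * i).choose (i + 1 + k) * (2 * j).choose (i + j - (i + 1 + k))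
        = ∑ k ∈ range j,
            (if k < min i j then (2 * i).choose (i - (k + 1)) * (2 * j).choose (j - (k + 1)) else 0) := by
      refine Finset.sum_congr rfl fun k hk => ?_
      have hk' : k < j := Finset.mem_range.1 hk
      have e2 : i + j - (i + 1 + k) = j - (k + 1) := by omega
      rw [e2]
      by_cases h : k + 1 ≤ i
      · rw [if_pos (by omega)]
        congr 1
        rw [← Nat.choose_symm (by omega : i + 1 + k ≤ 2 * i)]
        congr 1; omega
      · rw [if_neg (by omega), Nat.choose_eq_zero_of_lt (by omega : 2 * i < i + 1 + k),
          zero_mul]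
    rw [h1, ← Finset.sum_subset (Finset.range_subset_range.2 (min_le_right i j))
      (fun t _ ht' => if_neg (by simpa using ht'))]
    exact Finset.sum_congr rfl fun t ht => if_pos (Finset.mem_range.1 ht)
  calc (2 * (i + j)).choose (i + j)
      = ∑ a ∈ range (i + j + 1), (2 * i).choose a * (2 * j).choose (i + j - a) := by
        rw [show 2 * (i + j) = 2 * i + 2 * j by ring, Nat.add_choose_eq,
          Finset.Nat.sum_antidiagonal_eq_sum_range_succ_mk]
    _ = ∑ a ∈ range (i + 1), (2 * i).choose a * (2 * j).choose (i + j - a)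
          + ∑ k ∈ range j, (2 * i).choose (i + 1 + k) * (2 * j).choose (i + j - (i + 1 + k)) := by
        rw [show i + j + 1 = (i + 1) + j by ring, Finset.sum_range_add]
    _ = _ := by
        rw [Finset.sum_range_succ, Nat.add_sub_cancel_left, hlow, hhigh]; ring

lemma full_sum (d i j : ℕ) (hi : i ≤ d) (hj : j ≤ d) :
    ∑ k ∈ range (d + 1),
        ((if k ≤ i then (2 * i).choose (i - k) else 0) * (if k = 0 then 1 else 2) *
          (if k ≤ j then (2 * j).choose (j - k) else 0))
      = (2 * (i + j)).choose (i + j) := by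
  have hsub : ∑ k ∈ range (min i j + 1),
        ((if k ≤ i then (2 * i).choose (i - k) else 0) * (if k = 0 then 1 else 2) *
          (if k ≤ j then (2 * j).choose (j - k) else 0))
      = ∑ k ∈ range (d + 1),
        ((if k ≤ i then (2 * i).choose (i - k) else 0) * (if k = 0 then 1 else 2) *
          (if k ≤ j then (2 * j).choose (j - k) else 0)) := by
    refine Finset.sum_subset (Finset.range_subset_range.2 (by omega)) fun k _ hk => ?_
    have : min i j + 1 ≤ k := by rw [Finset.mem_range] at hk; omega
    rcases le_or_gt k i with h | h
    · rw [if_neg (by omega : ¬ k ≤ j), mul_zero]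
    · rw [if_neg (by omega : ¬ k ≤ i), zero_mul, zero_mul]
  rw [← hsub, Finset.sum_range_succ', key_sum i j]
  simp only [if_pos (Nat.zero_le i), if_pos (Nat.zero_le j), if_pos rfl,
    Nat.sub_zero, mul_one, ite_true]
  norm_num
  rw [add_comm]
  congr 1
  rw [Finset.mul_sum]
  refine Finset.sum_congr rfl fun k hk => ?_
  have hk' : k < min i j := Finset.mem_range.1 hk
  rw [if_pos (show k < j by omega), if_pos (show k < i by omega)]
  ring


noncomputable def Lmat (d : ℕ) : Matrix (Fin (d + 1)) (Fin (d + 1)) ℝ :=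
  Matrix.of fun i k =>
    if (k : ℕ) ≤ (i : ℕ) then ((2 * (i : ℕ)).choose ((i : ℕ) - (k : ℕ)) : ℝ) else 0

noncomputable def wvec (d : ℕ) : Fin (d + 1) → ℝ := fun k => if (k : ℕ) = 0 then 1 else 2

lemma Lmat_det (d : ℕ) : (Lmat d).det = 1 := by
  rw [Matrix.det_of_lowerTriangular (Lmat d) (fun i j hij => ?_)]
  · rw [Finset.prod_congr rfl (fun i _ => show Lmat d i i = 1 from ?_), Finset.prod_const_one]
    simp [Lmat]
  · have hji : (i : ℕ) < (j : ℕ) := by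
      simp only [OrderDual.toDual_lt_toDual, Fin.lt_def] at hij
      exact hij
    simp only [Lmat, Matrix.of_apply]
    rw [if_neg (by omega : ¬ (j : ℕ) ≤ (i : ℕ))]

lemma wvec_det (d : ℕ) : (Matrix.diagonal (wvec d)).det = 2 ^ d := by
  rw [Matrix.det_diagonal, Fin.prod_univ_succ,
    Finset.prod_congr rfl (fun (k : Fin d) _ =>
      show wvec d k.succ = 2 from if_neg (Nat.succ_ne_zero _)),
    Finset.prod_const]
  simp [wvec]

lemma hankel_eq (d : ℕ) : (Matrix.of fun (i j : Fin (d + 1)) =>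
      (Nat.choose (2 * ((i : ℕ) + j)) ((i : ℕ) + j) : ℝ))
    = Lmat d * Matrix.diagonal (wvec d) * (Lmat d)ᵀ := by
  ext i j
  have hi : (i : ℕ) ≤ d := by omega
  have hj : (j : ℕ) ≤ d := by omega
  rw [Matrix.mul_assoc, Matrix.mul_apply]
  simp only [Matrix.diagonal_mul, Matrix.transpose_apply, Matrix.of_apply, Lmat, wvec]
  rw [show ((Nat.choose (2 * ((i : ℕ) + j)) ((i : ℕ) + j) : ℝ))
      = ((∑ k ∈ range (d + 1),
          ((if k ≤ (i : ℕ) then (2 * (i : ℕ)).choose ((i : ℕ) - k) else 0) *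
            (if k = 0 then 1 else 2) *
            (if k ≤ (j : ℕ) then (2 * (j : ℕ)).choose ((j : ℕ) - k) else 0)) : ℕ) : ℝ)
    from by rw [full_sum d i j hi hj]]
  rw [Nat.cast_sum, ← Fin.sum_univ_eq_sum_range (fun k =>
      (((if k ≤ (i : ℕ) then (2 * (i : ℕ)).choose ((i : ℕ) - k) else 0) *
        (if k = 0 then 1 else 2) *
        (if k ≤ (j : ℕ) then (2 * (j : ℕ)).choose ((j : ℕ) - k) else 0) : ℕ) : ℝ)) (d + 1)]
  refine Finset.sum_congr rfl fun k _ => ?_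
  split_ifs <;> push_cast <;> ring

/-- The `(d+1)×(d+1)` Hankel matrix of central binomial coefficients
`C(2(i+j), i+j)` has determinant `2^d`; in particular it is invertible. -/
theorem centralBinom_hankel_det (d : ℕ) :
    (Matrix.of fun (i j : Fin (d + 1)) =>
        (Nat.choose (2 * ((i : ℕ) + j)) ((i : ℕ) + j) : ℝ)).det = 2 ^ d ∧
    IsUnit (Matrix.of fun (i j : Fin (d + 1)) =>
        (Nat.choose (2 * ((i : ℕ) + j)) ((i : ℕ) + j) : ℝ)) := by
  have hdet : (Matrix.of fun (i j : Fin (d + 1)) =>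
      (Nat.choose (2 * ((i : ℕ) + j)) ((i : ℕ) + j) : ℝ)).det = 2 ^ d := by
    rw [hankel_eq d, Matrix.det_mul, Matrix.det_mul, Matrix.det_transpose, Lmat_det,
      wvec_det]
    ring
  exact ⟨hdet, (Matrix.isUnit_iff_isUnit_det _).2
    (hdet ▸ isUnit_iff_ne_zero.2 (by positivity))⟩
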